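/- With a Cantor basis (β_i) (β₀ = 1, β_i² + β_i = β_{i−1}) and vanishing polynomials s_i as above, s_i(β_i) = 1 for every i (assuming β₀,…,β_i are linearly independent over GF(2)). -/

import Mathlib

set_option linter.unusedSectionVars false

section aux
variable {F : Type*} [Field F] [CharP F 2] [DecidableEq F] (β : ℕ → F)

lemma aux_sum_symmDiff (S T : Finset ℕ) :
    ∑ j ∈ symmDiff S T, β j = ∑ j ∈ S, β j + ∑ j ∈ T, β j := by
  have h1 : ∑ j ∈ S \ T, β j + ∑ j ∈ S ∩ T, β j = ∑ j ∈ S, β j := by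
    rw [← Finset.sdiff_inter_self_left S T]
    exact Finset.sum_sdiff Finset.inter_subset_left
  have h2 : ∑ j ∈ T \ S, β j + ∑ j ∈ T ∩ S, β j = ∑ j ∈ T, β j := by
    rw [← Finset.sdiff_inter_self_left T S]
    exact Finset.sum_sdiff Finset.inter_subset_left
  have h3 : ∑ j ∈ symmDiff S T, β j = ∑ j ∈ S \ T, β j + ∑ j ∈ T \ S, β j := by
    rw [symmDiff_def, Finset.sup_eq_union]
    exact Finset.sum_union (disjoint_sdiff_sdiff)
  rw [Finset.inter_comm] at h2
  rw [h3, ← h1, ← h2]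
  have hc : ∀ a : F, a + a = 0 := CharTwo.add_self_eq_zero
  linear_combination -hc (∑ j ∈ S ∩ T, β j)

lemma aux_inj (n : ℕ) (hind : ∀ S ⊆ Finset.range n, (∑ j ∈ S, β j) = 0 → S = ∅)
    {S T : Finset ℕ} (hS : S ⊆ Finset.range n) (hT : T ⊆ Finset.range n)
    (h : ∑ j ∈ S, β j = ∑ j ∈ T, β j) : S = T := by
  have hsub : symmDiff S T ⊆ Finset.range n := by
    intro a ha
    rw [Finset.mem_symmDiff] at ha
    rcases ha with ⟨h1, _⟩ | ⟨h1, _⟩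
    · exact hS h1
    · exact hT h1
  have := hind _ hsub (by rw [aux_sum_symmDiff β S T, h, CharTwo.add_self_eq_zero])
  exact Finset.symmDiff_eq_empty.mp this

lemma auxA (V : ℕ → Finset F)
    (hV : ∀ i, V i = ((Finset.range i).powerset).image (fun S => ∑ j ∈ S, β j))
    (s : ℕ → F → F) (hs : ∀ i x, s i x = ∏ c ∈ V i, (x - c)) (i : ℕ)
    (hind : ∀ S ⊆ Finset.range (i + 1), (∑ j ∈ S, β j) = 0 → S = ∅) (x : F) :
    s (i + 1) x = s i x * s i (x - β i) := by
  have hmono : Finset.range i ⊆ Finset.range (i + 1) := by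
    simp [Finset.range_subset]
    intro a ha; omega
  have hinj1 : ∀ p ∈ (Finset.range (i+1)).powerset, ∀ q ∈ (Finset.range (i+1)).powerset,
      (∑ j ∈ p, β j) = (∑ j ∈ q, β j) → p = q := by
    intro p hp q hq h
    exact aux_inj β (i+1) hind (Finset.mem_powerset.mp hp) (Finset.mem_powerset.mp hq) h
  have hinj2 : ∀ p ∈ (Finset.range i).powerset, ∀ q ∈ (Finset.range i).powerset,
      (∑ j ∈ p, β j) = (∑ j ∈ q, β j) → p = q := by
    intro p hp q hq h
    exact aux_inj β (i+1) hind ((Finset.mem_powerset.mp hp).trans hmono)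
      ((Finset.mem_powerset.mp hq).trans hmono) h
  rw [hs, hs, hs, hV, hV, Finset.prod_image hinj1, Finset.prod_image hinj2,
    Finset.prod_image hinj2]
  have hnotmem : i ∉ Finset.range i := by simp
  rw [Finset.range_add_one, Finset.powerset_insert]
  have hdisj : Disjoint ((Finset.range i).powerset)
      (((Finset.range i).powerset).image (insert i)) := by
    rw [Finset.disjoint_left]
    intro S hS hS'
    rcases Finset.mem_image.mp hS' with ⟨T, hT, hTi⟩
    have : i ∈ S := by rw [← hTi]; exact Finset.mem_insert_self i T
    exact hnotmem (Finset.mem_powerset.mp hS this)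
  rw [Finset.prod_union hdisj]
  have hinsinj : ∀ p ∈ (Finset.range i).powerset, ∀ q ∈ (Finset.range i).powerset,
      insert i p = insert i q → p = q := by
    intro p hp q hq h
    have hip : i ∉ p := fun h' => hnotmem (Finset.mem_powerset.mp hp h')
    have hiq : i ∉ q := fun h' => hnotmem (Finset.mem_powerset.mp hq h')
    rw [← Finset.erase_insert hip, h, Finset.erase_insert hiq]
  rw [Finset.prod_image hinsinj]
  congr 1
  apply Finset.prod_congr rfl
  intro S hS
  have hiS : i ∉ S := fun h' => hnotmem (Finset.mem_powerset.mp hS h')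
  rw [Finset.sum_insert hiS]
  ring

lemma auxB (hβ0 : β 0 = 1) (hβ : ∀ i, β (i + 1) ^ 2 + β (i + 1) = β i)
    (V : ℕ → Finset F)
    (hV : ∀ i, V i = ((Finset.range i).powerset).image (fun S => ∑ j ∈ S, β j))
    (s : ℕ → F → F) (hs : ∀ i x, s i x = ∏ c ∈ V i, (x - c)) :
    ∀ i, (∀ S ⊆ Finset.range (i + 1), (∑ j ∈ S, β j) = 0 → S = ∅) →
      ∀ x, s (i + 1) x = s i (x ^ 2 + x) := by
  intro i
  induction i with
  | zero =>
    intro hind x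
    have h0 : ∀ y, s 0 y = y := by
      intro y
      rw [hs, hV]
      simp
    rw [auxA β V hV s hs 0 hind x, h0, h0, h0, hβ0, CharTwo.sub_eq_add]
    ring
  | succ i ih =>
    intro hind x
    have hind' : ∀ S ⊆ Finset.range (i + 1), (∑ j ∈ S, β j) = 0 → S = ∅ := by
      intro S hS
      exact hind S (hS.trans (by simp [Finset.range_subset]; intro a ha; omega))
    have hkey : (x - β (i+1)) ^ 2 + (x - β (i+1)) = (x ^ 2 + x) - β i := by
      rw [CharTwo.sub_eq_add, CharTwo.sub_eq_add, ← hβ i]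
      rw [CharTwo.add_sq]
      ring
    rw [auxA β V hV s hs (i+1) hind x, ih hind' x, ih hind' (x - β (i+1)), hkey,
      ← auxA β V hV s hs i hind' (x ^ 2 + x)]

end aux

theorem stmt_6 (F : Type*) [Field F] [CharP F 2] [DecidableEq F] (β : ℕ → F)
    (hβ0 : β 0 = 1) (hβ : ∀ i, β (i + 1) ^ 2 + β (i + 1) = β i)
    (V : ℕ → Finset F)
    (hV : ∀ i, V i = ((Finset.range i).powerset).image (fun S => ∑ j ∈ S, β j))
    (s : ℕ → F → F) (hs : ∀ i x, s i x = ∏ c ∈ V i, (x - c)) :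
    ∀ i, (∀ S ⊆ Finset.range (i + 1), (∑ j ∈ S, β j) = 0 → S = ∅) →
      s i (β i) = 1 := by
  intro i
  induction i with
  | zero =>
    intro _
    rw [hs, hV]
    simp [hβ0]
  | succ i ih =>
    intro hind
    have hind' : ∀ S ⊆ Finset.range (i + 1), (∑ j ∈ S, β j) = 0 → S = ∅ := by
      intro S hS
      exact hind S (hS.trans (by simp [Finset.range_subset]; intro a ha; omega))
    rw [auxB β hβ0 hβ V hV s hs i hind' (β (i+1)), hβ i, ih hind']
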